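/- Let d, n, p ∈ ℕ and b ∈ ℕ A_{d,n} with deg b ≥ p+2, and let γ be a (p−1)-cycle in Δ_b. Assume: (a) H_{p−3}(Δ_{c−e_1}) = 0 for all c ∈ ℕ A_{d,n} with deg c ≥ p+1, and (b) H_{q−1}(Δ_β) = 0 for all β ∈ ℕ A_{d,n} with deg β ≥ q+2 and all q ≤ p−1 (i.e. O_{P^n}(d) satisfies N_{p−1}). Then there exists a (p−1)-cycle γ' in Δ_{(0, b_1+b_2, b_3,...,b_{n+1})} that is homologous to γ in X_b = ⋃_{k=0}^{b_1} Δ_{b − k e_1 + k e_2}. -/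

import Mathlib

open Finset

/-- `A_{d,n}`: the exponent vectors of the degree-`d` monomials in `n+1` variables,
i.e. `{x ∈ ℕ^{n+1} : Σ_i x_i = d}`. -/
def Adn (d n : ℕ) : Set (Fin (n + 1) → ℕ) :=
  {x | ∑ i, x i = d}

/-- `F` is a face of the simplicial complex `Δ_v` on the vertex set `A_{d,n}`:
all vertices of `F` lie in `A_{d,n}` and the coordinatewise sum of the vertices of `F`
is at most `v`. -/
def IsFace (d n : ℕ) (v : Fin (n + 1) → ℕ) (F : Finset (Fin (n + 1) → ℕ)) : Prop :=
  ↑F ⊆ Adn d n ∧ ∀ i, ∑ a ∈ F, a i ≤ v i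

/-- (Ordered) simplicial `k`-chains with complex coefficients on the vertex set
`ℕ^{n+1} ⊇ A_{d,n}`: formal `ℂ`-linear combinations of `(k+1)`-tuples of vertices. -/
abbrev PChain (n k : ℕ) : Type :=
  (Fin (k + 1) → (Fin (n + 1) → ℕ)) →₀ ℂ

/-- The simplicial boundary operator on ordered chains. -/
noncomputable def bdry {n k : ℕ} (c : PChain n (k + 1)) : PChain n k :=
  c.sum fun σ a =>
    ∑ i : Fin (k + 2), ((-1 : ℂ) ^ (i : ℕ) * a) • Finsupp.single (σ ∘ i.succAbove) 1

/-- The augmentation (sum of coefficients) of a chain. -/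
noncomputable def aug {n k : ℕ} (c : PChain n k) : ℂ :=
  c.sum fun _ a => a

/-- (Reduced) cycles: in positive degree, chains with vanishing boundary; in degree `0`,
chains with vanishing augmentation. -/
def IsCycle {n : ℕ} : ∀ {k : ℕ}, PChain n k → Prop
  | 0, c => aug c = 0
  | _ + 1, c => bdry c = 0

/-- The chain `c` is supported on the simplicial complex `Δ_v`. -/
def ChainIn (d n : ℕ) (v : Fin (n + 1) → ℕ) {k : ℕ} (c : PChain n k) : Prop :=
  ∀ σ ∈ c.support, IsFace d n v (Finset.image σ Finset.univ)

/-- Vanishing of the `k`-th reduced (simplicial) homology of `Δ_v` with `ℂ`-coefficients: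
every supported `k`-cycle is the boundary of a supported `(k+1)`-chain. -/
def Hvanish (d n k : ℕ) (v : Fin (n + 1) → ℕ) : Prop :=
  ∀ c : PChain n k, ChainIn d n v c → IsCycle c →
    ∃ η : PChain n (k + 1), ChainIn d n v η ∧ bdry η = c

/-- The `r`-th standard basis vector `e_r` of `ℕ^m`. -/
def ee {m : ℕ} (r : Fin m) : Fin m → ℕ := fun i => if i = r then 1 else 0

/-- Join of a chain with a vertex: `a ∗ c`. -/
noncomputable def vjoin {n k : ℕ} (a : Fin (n + 1) → ℕ) (c : PChain n k) :
    PChain n (k + 1) :=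
  c.sum fun τ b => b • Finsupp.single (Fin.cons a τ) 1

/-- Join of two chains, `c₁ ∗ c₂` (with the appropriate sign conventions). -/
noncomputable def joinChain {n s t : ℕ} (c₁ : PChain n s) (c₂ : PChain n t) :
    PChain n (s + t + 1) :=
  ((-1 : ℂ) ^ (s * (s + 1) / 2)) •
    c₁.sum fun σ a => c₂.sum fun τ b =>
      (a * b) • Finsupp.single
        (fun i : Fin (s + t + 1 + 1) =>
          Fin.append σ τ (Fin.cast (show s + t + 1 + 1 = (s + 1) + (t + 1) by omega) i)) 1

/-- Reindexing of chains along an equality of dimensions. -/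
noncomputable def castChain {n k k' : ℕ} (h : k = k') (c : PChain n k) : PChain n k' :=
  Finsupp.mapDomain (fun σ => σ ∘ Fin.cast (show k' + 1 = k + 1 by omega)) c

/-- The chain `c` is supported on the union complex
`X_b = Δ_b ∪ Δ_{b−e₁+e₂} ∪ ⋯ ∪ Δ_{b−b₁e₁+b₁e₂}` (coordinates `e₁, e₂` are the
first two coordinates, i.e. indices `0, 1`). -/
def ChainInX (d n : ℕ) (b : Fin (n + 1) → ℕ) {k : ℕ} (c : PChain n k) : Prop :=
  ∀ σ ∈ c.support, ∃ j ≤ b 0,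
    IsFace d n (fun i => if i = 0 then b 0 - j else if i = 1 then b 1 + j else b i)
      (Finset.image σ Finset.univ)



namespace Stmt16Aux

variable {n k d : ℕ}

/-- the boundary of a single ordered simplex -/
noncomputable def gface {n k : ℕ} (σ : Fin (k + 2) → (Fin (n + 1) → ℕ)) : PChain n k :=
  ∑ i : Fin (k + 2), ((-1 : ℂ) ^ (i : ℕ)) • Finsupp.single (σ ∘ i.succAbove) (1 : ℂ)

noncomputable def bdryL {n k : ℕ} : PChain n (k + 1) →ₗ[ℂ] PChain n k :=
  Finsupp.lsum ℂ fun σ => LinearMap.id.smulRight (gface σ)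

lemma bdry_eq {c : PChain n (k + 1)} : bdry c = bdryL c := by
  rw [bdry, bdryL, Finsupp.lsum_apply]
  refine Finsupp.sum_congr fun σ _ => ?_
  rw [LinearMap.smulRight_apply, LinearMap.id_apply, gface, Finset.smul_sum]
  refine Finset.sum_congr rfl fun i _ => ?_
  rw [smul_smul, mul_comm]

lemma bdry_add (c c' : PChain n (k + 1)) : bdry (c + c') = bdry c + bdry c' := by
  simp [bdry_eq]

lemma bdry_sub (c c' : PChain n (k + 1)) : bdry (c - c') = bdry c - bdry c' := by
  simp [bdry_eq]

lemma bdry_zero : bdry (0 : PChain n (k + 1)) = 0 := by simp [bdry_eq]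

lemma bdry_neg (c : PChain n (k + 1)) : bdry (-c) = -bdry c := by simp [bdry_eq]

lemma bdry_smul (x : ℂ) (c : PChain n (k + 1)) : bdry (x • c) = x • bdry c := by
  simp [bdry_eq]

lemma bdry_single (σ : Fin (k + 2) → (Fin (n + 1) → ℕ)) (x : ℂ) :
    bdry (Finsupp.single σ x) = x • gface σ := by
  rw [bdry_eq, bdryL, Finsupp.lsum_single, LinearMap.smulRight_apply, LinearMap.id_apply]

noncomputable def vjoinL {n k : ℕ} (a : Fin (n + 1) → ℕ) :
    PChain n k →ₗ[ℂ] PChain n (k + 1) :=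
  Finsupp.lsum ℂ fun τ => LinearMap.id.smulRight (Finsupp.single (Fin.cons a τ) (1 : ℂ))

lemma vjoin_eq {a : Fin (n + 1) → ℕ} {c : PChain n k} : vjoin a c = vjoinL a c := by
  rw [vjoin, vjoinL, Finsupp.lsum_apply]; rfl

lemma vjoin_add (a : Fin (n + 1) → ℕ) (c c' : PChain n k) :
    vjoin a (c + c') = vjoin a c + vjoin a c' := by simp [vjoin_eq]

lemma vjoin_sub (a : Fin (n + 1) → ℕ) (c c' : PChain n k) :
    vjoin a (c - c') = vjoin a c - vjoin a c' := by simp [vjoin_eq]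

lemma vjoin_zero (a : Fin (n + 1) → ℕ) : vjoin a (0 : PChain n k) = 0 := by simp [vjoin_eq]

lemma vjoin_single (a : Fin (n + 1) → ℕ) (τ : Fin (k + 1) → (Fin (n + 1) → ℕ)) (x : ℂ) :
    vjoin a (Finsupp.single τ x) = x • Finsupp.single (Fin.cons a τ) 1 := by
  rw [vjoin_eq, vjoinL, Finsupp.lsum_single, LinearMap.smulRight_apply, LinearMap.id_apply]

noncomputable def augL {n k : ℕ} : PChain n k →ₗ[ℂ] ℂ :=
  Finsupp.lsum ℂ fun _ => LinearMap.id

lemma aug_eq {c : PChain n k} : aug c = augL c := by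
  rw [aug, augL, Finsupp.lsum_apply]; rfl

lemma aug_single (σ : Fin (k + 1) → (Fin (n + 1) → ℕ)) (x : ℂ) :
    aug (Finsupp.single σ x) = x := by
  rw [aug_eq, augL, Finsupp.lsum_single, LinearMap.id_apply]

end Stmt16Aux
namespace Stmt16Aux

variable {n k d : ℕ}

lemma mem_support_bdry {c : PChain n (k + 1)} {σ : Fin (k + 1) → (Fin (n + 1) → ℕ)}
    (h : σ ∈ (bdry c).support) :
    ∃ τ ∈ c.support, ∃ i : Fin (k + 2), σ = τ ∘ i.succAbove := by
  classical
  have h1 : (bdry c).support ⊆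
      c.support.biUnion fun τ => (∑ i : Fin (k + 2),
        ((-1 : ℂ) ^ (i : ℕ) * c τ) • Finsupp.single (τ ∘ i.succAbove) (1 : ℂ)).support := by
    rw [bdry]; exact Finsupp.support_sum
  have h2 := h1 h
  rw [Finset.mem_biUnion] at h2
  obtain ⟨τ, hτ, hσ⟩ := h2
  refine ⟨τ, hτ, ?_⟩
  have h3 := Finsupp.support_finset_sum hσ
  rw [Finset.mem_biUnion] at h3
  obtain ⟨i, _, hσi⟩ := h3
  have h4 := Finsupp.support_smul hσi
  have := Finsupp.support_single_subset h4
  rw [Finset.mem_singleton] at this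
  exact ⟨i, this⟩

lemma mem_support_vjoin {a : Fin (n + 1) → ℕ} {c : PChain n k}
    {σ : Fin (k + 2) → (Fin (n + 1) → ℕ)} (h : σ ∈ (vjoin a c).support) :
    ∃ τ ∈ c.support, σ = Fin.cons a τ := by
  classical
  have h1 : (vjoin a c).support ⊆
      c.support.biUnion fun τ => (c τ • Finsupp.single (Fin.cons a τ) (1 : ℂ)).support := by
    rw [vjoin]; exact Finsupp.support_sum
  have h2 := h1 h
  rw [Finset.mem_biUnion] at h2
  obtain ⟨τ, hτ, hσ⟩ := h2
  have h3 := Finsupp.support_smul hσ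
  have := Finsupp.support_single_subset h3
  rw [Finset.mem_singleton] at this
  exact ⟨τ, hτ, this⟩

lemma cons_comp_succAbove_zero (a : Fin (n + 1) → ℕ) (τ : Fin (k + 1) → (Fin (n + 1) → ℕ)) :
    (Fin.cons a τ : Fin (k + 2) → _) ∘ (0 : Fin (k + 2)).succAbove = τ := by
  funext l
  simp [Fin.succAbove, Fin.cons_succ]

lemma cons_comp_succAbove_succ (a : Fin (n + 1) → ℕ) (τ : Fin (k + 2) → (Fin (n + 1) → ℕ))
    (j : Fin (k + 2)) :
    (Fin.cons a τ : Fin (k + 3) → _) ∘ (j.succ).succAbove =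
      Fin.cons a (τ ∘ j.succAbove) := by
  funext l
  induction l using Fin.cases with
  | zero =>
    have h0 : (j.succ).succAbove 0 = 0 := by
      rw [Fin.succAbove_of_castSucc_lt]
      · rfl
      · simp [Fin.lt_def]
    simp [Function.comp, h0]
  | succ l =>
    have h1 : (j.succ).succAbove l.succ = (j.succAbove l).succ := Fin.succ_succAbove_succ j l
    simp [Function.comp, h1]

lemma vjoinL_gface (a : Fin (n + 1) → ℕ) (τ : Fin (k + 2) → (Fin (n + 1) → ℕ)) :
    vjoinL a (gface τ : PChain n k) =
      ∑ j : Fin (k + 2), ((-1 : ℂ) ^ (j : ℕ)) •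
        Finsupp.single (Fin.cons a (τ ∘ j.succAbove)) (1 : ℂ) := by
  rw [gface, map_sum]
  refine Finset.sum_congr rfl fun j _ => ?_
  rw [map_smul, vjoinL, Finsupp.lsum_single, LinearMap.smulRight_apply, LinearMap.id_apply,
    one_smul]

lemma bdry_vjoin (a : Fin (n + 1) → ℕ) (c : PChain n (k + 1)) :
    bdry (vjoin a c) = c - vjoin a (bdry c) := by
  induction c using Finsupp.induction_linear with
  | zero => simp [vjoin_zero, bdry_zero]
  | add f g hf hg =>
      rw [vjoin_add, bdry_add, hf, hg, bdry_add, vjoin_add]; abel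
  | single τ x =>
      rw [vjoin_single, bdry_smul, bdry_single, bdry_single, one_smul, gface,
        Fin.sum_univ_succ]
      rw [cons_comp_succAbove_zero]
      have hterm : ∀ j : Fin (k + 2),
          ((-1 : ℂ) ^ ((j.succ : Fin (k+3)) : ℕ)) •
            Finsupp.single ((Fin.cons a τ : Fin (k+3) → _) ∘ (j.succ).succAbove) (1 : ℂ)
          = -(((-1 : ℂ) ^ (j : ℕ)) • Finsupp.single (Fin.cons a (τ ∘ j.succAbove)) (1 : ℂ)) := by
        intro j
        rw [cons_comp_succAbove_succ, Fin.val_succ, pow_succ, mul_neg_one, neg_smul]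
      rw [Finset.sum_congr rfl (fun j _ => hterm j)]
      rw [vjoin_eq, map_smul, vjoinL_gface]
      rw [Fin.val_zero, pow_zero, one_smul, Finset.sum_neg_distrib]
      rw [smul_add, smul_neg, Finsupp.smul_single, smul_eq_mul, mul_one, sub_eq_add_neg]

lemma bdry_vjoin_zero (a : Fin (n + 1) → ℕ) (c : PChain n 0) :
    bdry (vjoin a c) = c - (aug c) • Finsupp.single (fun _ => a) (1 : ℂ) := by
  induction c using Finsupp.induction_linear with
  | zero => simp [vjoin_zero, bdry_zero, aug_eq]
  | add f g hf hg =>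
      rw [vjoin_add, bdry_add, hf, hg]
      simp only [aug_eq, map_add, add_smul]
      abel
  | single τ x =>
      rw [vjoin_single, bdry_smul, bdry_single, one_smul, aug_single, gface,
        Fin.sum_univ_two]
      have h0 : (Fin.cons a τ : Fin 2 → _) ∘ (0 : Fin 2).succAbove = τ :=
        cons_comp_succAbove_zero a τ
      have h1 : (Fin.cons a τ : Fin 2 → _) ∘ (1 : Fin 2).succAbove = fun _ => a := by
        funext l
        have : (1 : Fin 2).succAbove l = 0 := by
          have : l = 0 := Subsingleton.elim l 0
          subst this
          rfl
        simp [Function.comp, this]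
      rw [h0, h1]
      rw [Fin.val_zero, pow_zero, one_smul, Fin.val_one, pow_one, neg_one_smul]
      rw [smul_add, smul_neg, Finsupp.smul_single, smul_eq_mul, mul_one, sub_eq_add_neg]

lemma aug_bdry (c : PChain n 1) : aug (bdry c) = 0 := by
  induction c using Finsupp.induction_linear with
  | zero => simp [bdry_zero, aug_eq]
  | add f g hf hg => rw [bdry_add, aug_eq, map_add, ← aug_eq, ← aug_eq, hf, hg, add_zero]
  | single τ x =>
      rw [bdry_single, aug_eq, map_smul, gface, map_sum, Fin.sum_univ_two]
      simp only [map_smul, ← aug_eq, aug_single]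
      rw [Fin.val_zero, pow_zero, Fin.val_one, pow_one]
      simp

end Stmt16Aux
namespace Stmt16Aux

variable {n k d : ℕ}

lemma val_succAbove {r : ℕ} (p : Fin (r + 1)) (q : Fin r) :
    ((p.succAbove q : Fin (r + 1)) : ℕ) = if (q : ℕ) < (p : ℕ) then (q : ℕ) else (q : ℕ) + 1 := by
  rw [Fin.succAbove]
  split_ifs with h1 h2 h2
  · rfl
  · exact absurd (by simpa [Fin.lt_def] using h1) h2
  · exact absurd (by simpa [Fin.lt_def] using h2) h1
  · rfl

/-- the pairing involution used to prove `∂∂ = 0`. -/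
def ii {k : ℕ} (p : Fin (k + 3) × Fin (k + 2)) : Fin (k + 3) × Fin (k + 2) :=
  if h : (p.2 : ℕ) < (p.1 : ℕ) then
    (⟨(p.2 : ℕ), by have := p.2.isLt; omega⟩, ⟨(p.1 : ℕ) - 1, by have := p.1.isLt; omega⟩)
  else
    (⟨(p.2 : ℕ) + 1, by have := p.2.isLt; omega⟩,
     ⟨(p.1 : ℕ), by have := p.2.isLt; omega⟩)

lemma ii_comp (p : Fin (k + 3) × Fin (k + 2)) (l : Fin (k + 1)) :
    (ii p).1.succAbove ((ii p).2.succAbove l) = p.1.succAbove (p.2.succAbove l) := by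
  apply Fin.ext
  rw [ii]
  have hl := l.isLt
  have h1 := p.1.isLt
  have h2 := p.2.isLt
  split_ifs with h
  · simp only [val_succAbove]
    split_ifs <;> simp_all <;> omega
  · simp only [val_succAbove]
    split_ifs <;> simp_all <;> omega

lemma ii_sign (p : Fin (k + 3) × Fin (k + 2)) :
    ((-1 : ℂ) ^ (((p.1 : ℕ)) + ((p.2 : ℕ))) +
      (-1 : ℂ) ^ ((((ii p).1 : ℕ)) + (((ii p).2 : ℕ)))) = 0 := by
  rw [ii]
  split_ifs with h
  · have : (p.1 : ℕ) + (p.2 : ℕ) = ((p.2 : ℕ) + ((p.1 : ℕ) - 1)) + 1 := by omega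
    rw [this, pow_succ, mul_neg_one]
    ring
  · have : ((p.2 : ℕ) + 1) + (p.1 : ℕ) = ((p.1 : ℕ) + (p.2 : ℕ)) + 1 := by omega
    simp only [this, pow_succ, mul_neg_one]
    ring

lemma ii_ne (p : Fin (k + 3) × Fin (k + 2)) : ii p ≠ p := by
  intro hEq
  have h1 : ((ii p).1 : ℕ) = (p.1 : ℕ) := by rw [hEq]
  rw [ii] at h1
  split_ifs at h1 <;> simp at h1 <;> omega

lemma ii_ii (p : Fin (k + 3) × Fin (k + 2)) : ii (ii p) = p := by
  have h1 := p.1.isLt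
  have h2 := p.2.isLt
  rw [ii, ii]
  split_ifs with h g g
  · exfalso; simp at g; omega
  · refine Prod.ext (Fin.ext ?_) (Fin.ext ?_) <;> simp <;> omega
  · refine Prod.ext (Fin.ext ?_) (Fin.ext ?_) <;> simp <;> omega
  · exfalso; simp at g; omega

lemma bdry_gface (σ : Fin (k + 3) → (Fin (n + 1) → ℕ)) :
    bdry (gface σ : PChain n (k + 1)) = 0 := by
  rw [show (gface σ : PChain n (k+1)) =
      ∑ i : Fin (k + 3), ((-1 : ℂ) ^ (i : ℕ)) • Finsupp.single (σ ∘ i.succAbove) (1 : ℂ)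
    from rfl]
  rw [bdry_eq, map_sum]
  simp only [map_smul, ← bdry_eq, bdry_single, one_smul]
  have hexp : ∀ i : Fin (k + 3),
      (-1 : ℂ) ^ (i : ℕ) • (gface (σ ∘ i.succAbove) : PChain n k) =
      ∑ j : Fin (k + 2), ((-1 : ℂ) ^ ((i : ℕ) + (j : ℕ))) •
        Finsupp.single (σ ∘ i.succAbove ∘ j.succAbove) (1 : ℂ) := by
    intro i
    rw [gface, Finset.smul_sum]
    refine Finset.sum_congr rfl fun j _ => ?_
    rw [smul_smul, ← pow_add]
    rfl
  rw [Finset.sum_congr rfl fun i _ => hexp i]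
  rw [← Finset.sum_product']
  refine Finset.sum_ninvolution ii ?_ ?_ ?_ ?_
  · intro p
    have hcomp : σ ∘ (ii p).1.succAbove ∘ (ii p).2.succAbove
        = σ ∘ p.1.succAbove ∘ p.2.succAbove := by
      funext l; exact congrArg σ (ii_comp p l)
    rw [hcomp, ← add_smul]
    rw [show ((-1:ℂ) ^ ((p.1 : ℕ) + (p.2 : ℕ)) + (-1:ℂ) ^ (((ii p).1 : ℕ) + ((ii p).2 : ℕ))) = 0
      from ii_sign p]
    rw [zero_smul]
  · intro p _
    exact ii_ne p
  · intro p; simp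
  · intro p; exact ii_ii p

lemma bdry_bdry (c : PChain n (k + 2)) : bdry (bdry c) = 0 := by
  induction c using Finsupp.induction_linear with
  | zero => rw [bdry_zero, bdry_zero]
  | add f g hf hg => rw [bdry_add, bdry_add, hf, hg, add_zero]
  | single τ x => rw [bdry_single, bdry_smul, bdry_gface, smul_zero]

end Stmt16Aux
namespace Stmt16Aux

variable {n k d : ℕ}

/-- vertex set of an ordered simplex -/
def vset {k : ℕ} (σ : Fin (k + 1) → (Fin (n + 1) → ℕ)) : Finset (Fin (n + 1) → ℕ) :=
  Finset.image σ Finset.univ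

/-- positive part (vertices with positive 0-th coordinate) -/
noncomputable def Pp (S : Finset (Fin (n + 1) → ℕ)) : Finset (Fin (n + 1) → ℕ) :=
  S.filter (fun x => 0 < x 0)

lemma Pp_subset (S : Finset (Fin (n + 1) → ℕ)) : Pp S ⊆ S := Finset.filter_subset _ _

lemma Pp_mono {S T : Finset (Fin (n + 1) → ℕ)} (h : S ⊆ T) : Pp S ⊆ Pp T :=
  Finset.filter_subset_filter _ h

lemma mem_Pp {S : Finset (Fin (n + 1) → ℕ)} {x} : x ∈ Pp S ↔ x ∈ S ∧ 0 < x 0 :=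
  Finset.mem_filter

lemma wt0_eq_wt0_Pp (S : Finset (Fin (n + 1) → ℕ)) :
    ∑ x ∈ S, x 0 = ∑ x ∈ Pp S, x 0 := by
  rw [Pp]
  exact (Finset.sum_filter_of_ne (fun x _ h => Nat.pos_of_ne_zero h)).symm

lemma sum_le_of_subset {S T : Finset (Fin (n + 1) → ℕ)} (h : S ⊆ T) (i : Fin (n + 1)) :
    ∑ x ∈ S, x i ≤ ∑ x ∈ T, x i :=
  Finset.sum_le_sum_of_subset h

/-- subsets of a positive-weight set with at least equal weight must be everything -/
lemma eq_of_subset_of_wt_ge {S T : Finset (Fin (n + 1) → ℕ)} (hsub : S ⊆ T)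
    (hpos : ∀ x ∈ T, 0 < x 0) (hwt : ∑ x ∈ T, x 0 ≤ ∑ x ∈ S, x 0) : S = T := by
  by_contra hne
  obtain ⟨y, hyT, hyS⟩ := Finset.exists_of_ssubset (hsub.ssubset_of_ne hne)
  have h5 : ∑ x ∈ S, x 0 < ∑ x ∈ T, x 0 :=
    Finset.sum_lt_sum_of_subset hsub hyT hyS (hpos y hyT) (fun j _ _ => Nat.zero_le _)
  exact Nat.lt_irrefl _ (lt_of_lt_of_le h5 hwt)

lemma wt_lt_of_ssubset {S T : Finset (Fin (n + 1) → ℕ)} (hsub : S ⊆ T) (hne : S ≠ T)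
    (hpos : ∀ x ∈ T, 0 < x 0) : ∑ x ∈ S, x 0 < ∑ x ∈ T, x 0 := by
  by_contra hle
  exact hne (eq_of_subset_of_wt_ge hsub hpos (Nat.le_of_not_lt hle))

lemma Pp_insert_pos {S : Finset (Fin (n + 1) → ℕ)} {a} (ha : 0 < a 0) :
    Pp (insert a S) = insert a (Pp S) := by
  rw [Pp, Finset.filter_insert, if_pos ha]
  rfl

lemma sum_insert_le (a : Fin (n + 1) → ℕ) (S : Finset (Fin (n + 1) → ℕ)) (i : Fin (n + 1)) :
    ∑ x ∈ insert a S, x i ≤ a i + ∑ x ∈ S, x i := by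
  by_cases h : a ∈ S
  · rw [Finset.insert_eq_self.2 h]; exact Nat.le_add_left _ _
  · rw [Finset.sum_insert h]

lemma vset_comp_subset (τ : Fin (k + 2) → (Fin (n + 1) → ℕ)) (i : Fin (k + 2)) :
    vset (τ ∘ i.succAbove) ⊆ vset τ := by
  intro x hx
  rw [vset, Finset.mem_image] at hx ⊢
  obtain ⟨l, _, hl⟩ := hx
  exact ⟨i.succAbove l, Finset.mem_univ _, hl⟩

lemma vset_cons (a : Fin (n + 1) → ℕ) (τ : Fin (k + 1) → (Fin (n + 1) → ℕ)) :
    vset (Fin.cons a τ : Fin (k + 2) → _) = insert a (vset τ) := by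
  rw [vset, vset]
  ext x
  simp only [Finset.mem_image, Finset.mem_univ, true_and, Finset.mem_insert]
  constructor
  · rintro ⟨l, hl⟩
    induction l using Fin.cases with
    | zero => left; rw [← hl]; rfl
    | succ l => right; exact ⟨l, by rw [← hl]; rfl⟩
  · rintro (rfl | ⟨l, hl⟩)
    · exact ⟨0, rfl⟩
    · exact ⟨l.succ, by rw [← hl]; rfl⟩

/-- a vertex of a face of `Δ_v` is pointwise `≤ v` -/
lemma vertex_le {S : Finset (Fin (n + 1) → ℕ)} {a} (haS : a ∈ S)
    {v : Fin (n + 1) → ℕ} (hS : ∀ i, ∑ x ∈ S, x i ≤ v i) : ∀ i, a i ≤ v i := by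
  intro i
  have h1 : a i ≤ ∑ x ∈ S, x i :=
    Finset.single_le_sum (f := fun x => x i) (fun x _ => Nat.zero_le _) haS
  exact le_trans h1 (hS i)

lemma sum_erase_le {S : Finset (Fin (n + 1) → ℕ)} {a} (haS : a ∈ S)
    {v : Fin (n + 1) → ℕ} (hS : ∀ i, ∑ x ∈ S, x i ≤ v i) :
    ∀ (T : Finset (Fin (n + 1) → ℕ)), T ⊆ S → a ∉ T → ∀ i, ∑ x ∈ T, x i ≤ v i - a i := by
  intro T hTS haT i
  have h1 : T ⊆ S.erase a := fun x hx => Finset.mem_erase.2 ⟨fun he => haT (he ▸ hx), hTS hx⟩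
  have h2 : ∑ x ∈ T, x i ≤ ∑ x ∈ S.erase a, x i := Finset.sum_le_sum_of_subset h1
  have h3 : a i + ∑ x ∈ S.erase a, x i = ∑ x ∈ S, x i :=
    Finset.add_sum_erase S (fun x => x i) haS
  have h4 := hS i
  have h5 : a i + ∑ x ∈ T, x i ≤ v i := le_trans (Nat.add_le_add_left h2 _) (le_of_eq_of_le h3 h4)
  exact Nat.le_sub_of_add_le (by rwa [Nat.add_comm] at h5)

/-- greedy choice of a vertex below `w` -/
lemma exists_vertex (n : ℕ) : ∀ (d : ℕ) (w : Fin (n + 1) → ℕ), d ≤ ∑ i, w i →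
    ∃ y : Fin (n + 1) → ℕ, (∑ i, y i = d) ∧ ∀ i, y i ≤ w i := by
  intro d
  induction d with
  | zero => exact fun w _ => ⟨fun _ => 0, by simp, fun _ => Nat.zero_le _⟩
  | succ d ih =>
      intro w hw
      have hpos : ∃ i0, 0 < w i0 := by
        by_contra hno
        push_neg at hno
        have : ∑ i, w i = 0 := Finset.sum_eq_zero (fun i _ => Nat.le_zero.1 (hno i))
        omega
      obtain ⟨i0, hi0⟩ := hpos
      set w' : Fin (n + 1) → ℕ := Function.update w i0 (w i0 - 1) with hw'
      have hsum' : ∑ i, w' i + 1 = ∑ i, w i := by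
        rw [hw', Finset.sum_update_of_mem (Finset.mem_univ i0),
          Finset.sdiff_singleton_eq_erase]
        have : ∑ i ∈ Finset.univ.erase i0, w i + w i0 = ∑ i, w i :=
          Finset.sum_erase_add Finset.univ (fun i => w i) (Finset.mem_univ i0)
        omega
      obtain ⟨y', hy1, hy2⟩ := ih w' (by omega)
      refine ⟨Function.update y' i0 (y' i0 + 1), ?_, ?_⟩
      · rw [Finset.sum_update_of_mem (Finset.mem_univ i0),
          Finset.sdiff_singleton_eq_erase]
        have : ∑ i ∈ Finset.univ.erase i0, y' i + y' i0 = ∑ i, y' i :=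
          Finset.sum_erase_add Finset.univ (fun i => y' i) (Finset.mem_univ i0)
        omega
      · intro i
        by_cases hii : i = i0
        · subst hii
          have := hy2 i
          rw [Function.update_self]
          rw [hw'] at this
          rw [Function.update_self] at this
          omega
        · rw [Function.update_of_ne hii]
          have := hy2 i
          rw [hw', Function.update_of_ne hii] at this
          exact this

lemma dvd_sum_of_mem_closure {x : Fin (n + 1) → ℕ}
    (hx : x ∈ AddSubmonoid.closure (Adn d n)) : d ∣ ∑ i, x i := by
  induction hx using AddSubmonoid.closure_induction with
  | mem y hy => exact hy ▸ dvd_refl d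
  | zero => simp
  | add y z _ _ hy hz =>
      have : ∑ i, (y + z) i = ∑ i, y i + ∑ i, z i := by
        simp [Finset.sum_add_distrib]
      rw [this]; exact dvd_add hy hz

lemma mem_closure_of_dvd : ∀ (N : ℕ) (x : Fin (n + 1) → ℕ), ∑ i, x i ≤ N → d ∣ ∑ i, x i →
    x ∈ AddSubmonoid.closure (Adn d n) := by
  intro N
  induction N with
  | zero =>
      intro x hx _
      have : x = 0 := by
        funext i
        have h1 : x i ≤ ∑ j, x j :=
          Finset.single_le_sum (fun j _ => Nat.zero_le _) (Finset.mem_univ i)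
        have : x i = 0 := by omega
        rw [this]; rfl
      rw [this]; exact AddSubmonoid.zero_mem _
  | succ N ih =>
      intro x hx hdvd
      by_cases hz : ∑ i, x i = 0
      · have : x = 0 := by
          funext i
          have h1 : x i ≤ ∑ j, x j :=
            Finset.single_le_sum (fun j _ => Nat.zero_le _) (Finset.mem_univ i)
          have : x i = 0 := by omega
          rw [this]; rfl
        rw [this]; exact AddSubmonoid.zero_mem _
      · have hd : 0 < d := by
          rcases Nat.eq_zero_or_pos d with h | h
          · exfalso; rw [h] at hdvd; exact hz (Nat.eq_zero_of_zero_dvd hdvd)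
          · exact h
        have hdle : d ≤ ∑ i, x i := Nat.le_of_dvd (Nat.pos_of_ne_zero hz) hdvd
        obtain ⟨y, hy1, hy2⟩ := exists_vertex n d x hdle
        have hxy : x = y + (x - y) := by
          funext i
          have := hy2 i
          simp only [Pi.add_apply, Pi.sub_apply]
          omega
        have hsub : ∑ i, (x - y) i = ∑ i, x i - d := by
          have h1 : ∑ i, (x - y) i + ∑ i, y i = ∑ i, x i := by
            rw [← Finset.sum_add_distrib]
            refine Finset.sum_congr rfl fun i _ => ?_
            have := hy2 i
            simp only [Pi.sub_apply, Pi.add_apply]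
            omega
          omega
        rw [hxy]
        refine AddSubmonoid.add_mem _ (AddSubmonoid.subset_closure hy1) (ih (x - y) ?_ ?_)
        · omega
        · rw [hsub]
          exact Nat.dvd_sub hdvd (dvd_refl d)

end Stmt16Aux
namespace Stmt16Aux

variable {n k d : ℕ}

lemma chainIn_iff {v : Fin (n + 1) → ℕ} {c : PChain n k} :
    ChainIn d n v c ↔ ∀ σ ∈ c.support, (↑(vset σ) ⊆ Adn d n ∧ ∀ i, ∑ x ∈ vset σ, x i ≤ v i) :=
  Iff.rfl

lemma chainIn_mono {v w : Fin (n + 1) → ℕ} (h : ∀ i, v i ≤ w i) {c : PChain n k}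
    (hc : ChainIn d n v c) : ChainIn d n w c := fun σ hσ =>
  ⟨(hc σ hσ).1, fun i => le_trans ((hc σ hσ).2 i) (h i)⟩

lemma chainIn_of_subset {v : Fin (n + 1) → ℕ} {c c' : PChain n k}
    (h : c'.support ⊆ c.support) (hc : ChainIn d n v c) : ChainIn d n v c' :=
  fun σ hσ => hc σ (h hσ)

lemma chainIn_add {v : Fin (n + 1) → ℕ} {c c' : PChain n k}
    (hc : ChainIn d n v c) (hc' : ChainIn d n v c') : ChainIn d n v (c + c') := by
  intro σ hσ
  rcases Finset.mem_union.1 (Finsupp.support_add hσ) with h | h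
  · exact hc σ h
  · exact hc' σ h

lemma chainIn_sub {v : Fin (n + 1) → ℕ} {c c' : PChain n k}
    (hc : ChainIn d n v c) (hc' : ChainIn d n v c') : ChainIn d n v (c - c') := by
  intro σ hσ
  rcases Finset.mem_union.1 (Finsupp.support_sub hσ) with h | h
  · exact hc σ h
  · exact hc' σ h

lemma chainIn_zero {v : Fin (n + 1) → ℕ} : ChainIn d n v (0 : PChain n k) := by
  intro σ hσ
  simp at hσ

lemma sum_sub_add {x v : Fin (n + 1) → ℕ} (h : ∀ i, x i ≤ v i) :
    ∑ i, (v - x) i + ∑ i, x i = ∑ i, v i := by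
  rw [← Finset.sum_add_distrib]
  refine Finset.sum_congr rfl fun i _ => ?_
  have := h i
  simp only [Pi.sub_apply]
  omega

lemma sub_ee_apply (v : Fin (n + 1) → ℕ) (i : Fin (n + 1)) :
    (v - ee (0 : Fin (n + 1))) i = v i - (if i = 0 then 1 else 0) := rfl

lemma isCycle_bdry (φ : PChain n (k + 1)) : IsCycle (bdry φ) := by
  cases k with
  | zero => exact aug_bdry φ
  | succ k'' => exact bdry_bdry φ

lemma eq_of_between {G T : Finset (Fin (n + 1) → ℕ)} {a} (haG : a ∈ G)
    (h1 : G.erase a ⊆ T) (h2 : T ⊆ G) (h3 : T ≠ G.erase a) : T = G := by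
  obtain ⟨t, htT, hte⟩ := Finset.exists_of_ssubset (h1.ssubset_of_ne (Ne.symm h3))
  have hta : t = a := by
    by_contra hne
    exact hte (Finset.mem_erase.2 ⟨hne, h2 htT⟩)
  refine subset_antisymm h2 ?_
  rw [← Finset.insert_erase haG]
  exact Finset.insert_subset (hta ▸ htT) h1

/-- dimension-generic conclusion of the peeling lemmas -/
def CallConc (d n : ℕ) {j : ℕ} (v : Fin (n + 1) → ℕ) (ψ : PChain n j) : Prop :=
  ∃ θ : PChain n (j + 1), ChainIn d n v θ ∧
    ∃ μ : PChain n j, ChainIn d n (v - ee 0) μ ∧ ψ = bdry θ + μ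

/-- dimension-generic "the boundary has no full faces" hypothesis -/
def NonfullBdry {n : ℕ} (v : Fin (n + 1) → ℕ) : ∀ {j : ℕ}, PChain n j → Prop
  | 0, _ => True
  | _ + 1, ψ => ∀ σ ∈ (bdry ψ).support, ∑ x ∈ vset σ, x 0 < v 0

/-- the statement of the peeling lemma, for positive parts of size `g` -/
def PeelStmt (d n m g : ℕ) : Prop :=
  ∀ G : Finset (Fin (n + 1) → ℕ), G.card = g → G.Nonempty → (∀ x ∈ G, 0 < x 0) →
    (↑G ⊆ Adn d n) → ∀ k : ℕ, k + 1 ≤ m + 2 → ∀ v : Fin (n + 1) → ℕ, (d ∣ ∑ i, v i) →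
    ((k + 4) * d ≤ ∑ i, v i) → (∑ x ∈ G, x 0 = v 0) →
    ∀ φ : PChain n (k + 1), ChainIn d n v φ → (∀ σ ∈ φ.support, Pp (vset σ) = G) →
    (∀ σ ∈ (bdry φ).support, ∑ x ∈ vset σ, x 0 < v 0) → CallConc d n v φ

end Stmt16Aux
namespace Stmt16Aux

variable {n k d : ℕ}

lemma vset_fin1 (σ : Fin (0 + 1) → (Fin (n + 1) → ℕ)) : vset σ = {σ 0} := by
  rw [vset]
  ext x
  simp only [Finset.mem_image, Finset.mem_univ, true_and, Finset.mem_singleton]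
  constructor
  · rintro ⟨l, hl⟩
    have hl0 : l = 0 := by
      have := l.isLt
      exact Fin.ext (by omega)
    rw [← hl, hl0]
  · rintro rfl
    exact ⟨0, rfl⟩

lemma peel0 (d n : ℕ) (v : Fin (n + 1) → ℕ) (G : Finset (Fin (n + 1) → ℕ))
    (hGne : G.Nonempty) (hGpos : ∀ x ∈ G, 0 < x 0) (hGA : ↑G ⊆ Adn d n)
    (hdvd : d ∣ ∑ i, v i) (hdeg : 3 * d ≤ ∑ i, v i) (hGwt : ∑ x ∈ G, x 0 = v 0)
    (φ : PChain n 0) (hφin : ChainIn d n v φ)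
    (hφG : ∀ σ ∈ φ.support, Pp (vset σ) = G) :
    CallConc d n v φ := by
  classical
  rcases Finset.eq_empty_or_nonempty φ.support with hemp | ⟨σ0, hσ0⟩
  · refine ⟨0, chainIn_zero, 0, chainIn_zero, ?_⟩
    rw [Finsupp.support_eq_empty.1 hemp, bdry_zero, add_zero]
  obtain ⟨x, hxG⟩ := hGne
  have hG0 : Pp (vset σ0) = G := hφG σ0 hσ0
  have hx0 : 0 < x 0 := hGpos x hxG
  -- every simplex in the support is the constant simplex at x
  have hconst : ∀ σ ∈ φ.support, σ = (fun _ => x) := by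
    intro σ hσ
    have h1 : Pp (vset σ) = G := hφG σ hσ
    have h2 : x ∈ Pp (vset σ) := h1 ▸ hxG
    have h3 : x ∈ vset σ := Pp_subset _ h2
    rw [vset_fin1] at h3
    rw [Finset.mem_singleton] at h3
    funext l
    have hl0 : l = 0 := Fin.ext (Nat.lt_one_iff.mp l.isLt)
    rw [hl0, ← h3]
  have hσ0x : σ0 = (fun _ => x) := hconst σ0 hσ0
  have hxv : ∀ i, x i ≤ v i := by
    intro i
    have h4 := (hφin σ0 hσ0).2 i
    rw [show Finset.image σ0 Finset.univ = vset σ0 from rfl, vset_fin1, hσ0x] at h4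
    simpa using h4
  have hxA : x ∈ Adn d n := hGA hxG
  have hxd : ∑ i, x i = d := hxA
  have hsub : ∑ i, (v - x) i + d = ∑ i, v i := by rw [← hxd]; exact sum_sub_add hxv
  obtain ⟨y, hy1, hy2⟩ := exists_vertex n d (v - x) (by clear hGwt; omega)
  have hyA : y ∈ Adn d n := hy1
  refine ⟨vjoin y φ, ?_, aug φ • Finsupp.single (fun _ => y) 1, ?_, ?_⟩
  · -- the cone is a chain in Δ_v
    intro σ' hσ'
    obtain ⟨σ, hσ, rfl⟩ := mem_support_vjoin hσ'
    rw [hconst σ hσ]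
    have hvs : vset (Fin.cons y (fun _ => x) : Fin (0 + 2) → _) = insert y {x} := by
      rw [vset_cons, vset_fin1]
    constructor
    · rw [show Finset.image (Fin.cons y (fun _ => x) : Fin (0+2) → _) Finset.univ
          = vset (Fin.cons y (fun _ => x) : Fin (0+2) → _) from rfl, hvs]
      rw [Finset.coe_insert]
      exact Set.insert_subset hyA (by rwa [Finset.coe_singleton, Set.singleton_subset_iff])
    · intro i
      rw [show Finset.image (Fin.cons y (fun _ => x) : Fin (0+2) → _) Finset.univ
          = vset (Fin.cons y (fun _ => x) : Fin (0+2) → _) from rfl, hvs]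
      have h5 : ∑ z ∈ insert y {x}, z i ≤ y i + ∑ z ∈ ({x} : Finset _), z i :=
        sum_insert_le y {x} i
      rw [Finset.sum_singleton] at h5
      have h6 : y i ≤ v i - x i := hy2 i
      have h7 := hxv i
      have h8 : y i + x i ≤ (v i - x i) + x i := Nat.add_le_add_right h6 (x i)
      rw [Nat.sub_add_cancel h7] at h8
      exact le_trans h5 (le_trans h8 (le_refl _))
  · -- the tip is a chain in Δ_{v - e1}
    intro σ' hσ'
    have h8 : σ' ∈ (Finsupp.single (fun _ => y : Fin (0+1) → _) (1:ℂ)).support := by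
      have := Finsupp.support_smul (b := aug φ)
        (g := Finsupp.single (fun _ => y : Fin (0+1) → _) (1:ℂ)) hσ'
      exact this
    have h9 := Finsupp.support_single_subset h8
    rw [Finset.mem_singleton] at h9
    subst h9
    constructor
    · rw [show Finset.image (fun _ => y : Fin (0+1) → _) Finset.univ
          = vset (fun _ => y : Fin (0+1) → _) from rfl, vset_fin1]
      rwa [Finset.coe_singleton, Set.singleton_subset_iff]
    · intro i
      rw [show Finset.image (fun _ => y : Fin (0+1) → _) Finset.univ
          = vset (fun _ => y : Fin (0+1) → _) from rfl, vset_fin1, Finset.sum_singleton]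
      rw [sub_ee_apply]
      have h6 : y i ≤ v i - x i := hy2 i
      have h7 := hxv i
      by_cases hi : i = 0
      · subst hi
        have : x 0 = v 0 := by
          have := hGwt
          have hGx : G = {x} := by
            apply subset_antisymm
            · intro z hz
              have h1 : Pp (vset σ0) = G := hφG σ0 hσ0
              have h2 : z ∈ Pp (vset σ0) := h1 ▸ hz
              have h3 : z ∈ vset σ0 := Pp_subset _ h2
              rw [vset_fin1, hσ0x] at h3
              simpa using h3
            · simpa using hxG
          rw [hGx, Finset.sum_singleton] at this
          exact this
        simp only [if_pos rfl]
        clear hGwt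
        omega
      · simp only [if_neg hi]
        clear hGwt
        omega
  · -- the equation φ = ∂θ + μ
    rw [bdry_vjoin_zero]
    abel

end Stmt16Aux
namespace Stmt16Aux

variable {n k d : ℕ}

open scoped Classical in
lemma nonfullBdry_psi (d n : ℕ) (k : ℕ) (v a : Fin (n + 1) → ℕ)
    (G : Finset (Fin (n + 1) → ℕ)) (haG : a ∈ G) (ha0 : 0 < a 0)
    (hGpos : ∀ x ∈ G, 0 < x 0) (hGwt : ∑ x ∈ G, x 0 = v 0)
    (φ : PChain n (k + 1)) (hφG : ∀ σ ∈ φ.support, Pp (vset σ) = G)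
    (hρwt : ∀ σ ∈ (bdry φ).support, ∑ x ∈ vset σ, x 0 < v 0) :
    NonfullBdry (v - a) (Finsupp.filter (fun σ => Pp (vset σ) = G.erase a) (bdry φ)) := by
  cases k with
  | zero => trivial
  | succ k'' =>
    intro σ hσ
    set p : (Fin (k'' + 1 + 1) → (Fin (n + 1) → ℕ)) → Prop :=
      fun σ => Pp (vset σ) = G.erase a with hp
    have hsplit : (bdry φ).filter p + (bdry φ).filter (fun σ => ¬ p σ) = bdry φ :=
      Finsupp.filter_pos_add_filter_neg (bdry φ) p
    have hbsum : bdry ((bdry φ).filter p) + bdry ((bdry φ).filter (fun σ => ¬ p σ)) = 0 := by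
      rw [← bdry_add, hsplit]
      exact bdry_bdry φ
    have hbneg : bdry ((bdry φ).filter p) = - bdry ((bdry φ).filter (fun σ => ¬ p σ)) :=
      eq_neg_of_add_eq_zero_left hbsum
    -- arithmetic about weights
    have haW : a 0 + ∑ x ∈ G.erase a, x 0 = v 0 := by
      rw [← hGwt]; exact Finset.add_sum_erase G (fun x => x 0) haG
    have hva : (v - a) 0 = ∑ x ∈ G.erase a, x 0 := by
      show v 0 - a 0 = _
      rw [← haW, Nat.add_sub_cancel_left]
    by_contra hge
    push_neg at hge
    -- (i) from ψ's own faces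
    obtain ⟨σ'', hσ''mem, i'', hfe⟩ := mem_support_bdry hσ
    have hσ''2 : σ'' ∈ (bdry φ).support ∧ p σ'' := by
      have := hσ''mem
      rw [Finsupp.support_filter, Finset.mem_filter] at this
      exact this
    have hsub'' : vset σ ⊆ vset σ'' := hfe ▸ vset_comp_subset σ'' i''
    have hPpσ : Pp (vset σ) ⊆ G.erase a := hσ''2.2 ▸ Pp_mono hsub''
    have herasePos : ∀ x ∈ G.erase a, 0 < x 0 := fun x hx =>
      hGpos x (Finset.erase_subset a G hx)
    have hped : Pp (vset σ) = G.erase a := by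
      refine eq_of_subset_of_wt_ge hPpσ herasePos ?_
      rw [← wt0_eq_wt0_Pp]
      rw [← hva]
      exact hge
    -- (ii) from χ's faces
    have hσχ : σ ∈ (bdry ((bdry φ).filter (fun σ => ¬ p σ))).support := by
      rw [hbneg, Finsupp.support_neg] at hσ
      exact hσ
    obtain ⟨σ', hσ'mem, i', hfe'⟩ := mem_support_bdry hσχ
    have hσ'2 : σ' ∈ (bdry φ).support ∧ ¬ p σ' := by
      have := hσ'mem
      rw [Finsupp.support_filter, Finset.mem_filter] at this
      exact this
    have hsub' : vset σ ⊆ vset σ' := hfe' ▸ vset_comp_subset σ' i'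
    have hσ'wt : ∑ x ∈ vset σ', x 0 < v 0 := hρwt σ' hσ'2.1
    obtain ⟨τ, hτ, iτ, hfeτ⟩ := mem_support_bdry hσ'2.1
    have hsubτ : vset σ' ⊆ vset τ := hfeτ ▸ vset_comp_subset τ iτ
    have hPpσ'G : Pp (vset σ') ⊆ G := (hφG τ hτ) ▸ Pp_mono hsubτ
    have h1 : G.erase a ⊆ Pp (vset σ') := hped ▸ Pp_mono hsub'
    have h2 : Pp (vset σ') = G := eq_of_between haG h1 hPpσ'G hσ'2.2
    have h3 : ∑ x ∈ vset σ', x 0 = v 0 := by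
      rw [wt0_eq_wt0_Pp, h2, hGwt]
    exact Nat.lt_irrefl _ (h3 ▸ hσ'wt)

lemma peel_call (d n m g : ℕ) (IH : ∀ g', g' < g → PeelStmt d n m g') :
    ∀ j : ℕ, j ≤ m + 2 → ∀ G' : Finset (Fin (n + 1) → ℕ), G'.card < g → G'.Nonempty →
    (∀ x ∈ G', 0 < x 0) → (↑G' ⊆ Adn d n) → ∀ v' : Fin (n + 1) → ℕ, (d ∣ ∑ i, v' i) →
    ((j + 3) * d ≤ ∑ i, v' i) → (∑ x ∈ G', x 0 = v' 0) →
    ∀ ψ : PChain n j, ChainIn d n v' ψ → (∀ σ ∈ ψ.support, Pp (vset σ) = G') →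
    NonfullBdry v' ψ → CallConc d n v' ψ := by
  intro j
  cases j with
  | zero =>
    intro _ G' _ hne hpos hA v' hdvd hdeg hwt ψ hin hPp _
    exact peel0 d n v' G' hne hpos hA hdvd hdeg hwt ψ hin hPp
  | succ j' =>
    intro hj G' hlt hne hpos hA v' hdvd hdeg hwt ψ hin hPp hnf
    exact IH G'.card hlt G' rfl hne hpos hA j' hj v' hdvd hdeg hwt ψ hin hPp hnf

end Stmt16Aux
namespace Stmt16Aux

lemma nat_aux (T S A W e : ℕ) (h5 : T ≤ A + S) (h6 : S ≤ W - A - e) (h7 : A ≤ W)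
    (h8 : e ≤ W - A) : T ≤ W - e := by omega

open scoped Classical in
lemma peel_step (d n m : ℕ)
    (hN : ∀ q, 1 ≤ q → q ≤ m + 2 → ∀ β ∈ AddSubmonoid.closure (Adn d n),
      (q + 2) * d ≤ ∑ i, β i → Hvanish d n (q - 1) β)
    (g : ℕ) (IH : ∀ g', g' < g → PeelStmt d n m g') : PeelStmt d n m g := by
  intro G hcard hGne hGpos hGA k hk v hdvd hdeg hGwt φ hφin hφG hρwt
  rcases Finset.eq_empty_or_nonempty φ.support with hemp | ⟨τ0, hτ0⟩
  · exact ⟨0, chainIn_zero, 0, chainIn_zero, by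
      rw [Finsupp.support_eq_empty.1 hemp, bdry_zero, add_zero]⟩
  obtain ⟨a, haG⟩ := hGne
  have ha0 : 0 < a 0 := hGpos a haG
  have haA : a ∈ Adn d n := hGA haG
  have haSum : ∑ i, a i = d := haA
  have havset : a ∈ vset τ0 := Pp_subset _ ((hφG τ0 hτ0).symm ▸ haG)
  have hale : ∀ i, a i ≤ v i := vertex_le havset (hφin τ0 hτ0).2
  have hv'sum : ∑ i, (v - a) i + d = ∑ i, v i := by
    rw [← haSum]; exact sum_sub_add hale
  have hv'dvd : d ∣ ∑ i, (v - a) i := by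
    have h1 : ∑ i, (v - a) i = ∑ i, v i - d := by clear hGwt; omega
    rw [h1]
    exact Nat.dvd_sub hdvd (dvd_refl d)
  have hGwt' : ∑ x ∈ G.erase a, x 0 = (v - a) 0 := by
    have haW : a 0 + ∑ x ∈ G.erase a, x 0 = v 0 := by
      rw [← hGwt]; exact Finset.add_sum_erase G (fun x => x 0) haG
    show _ = v 0 - a 0
    rw [← haW, Nat.add_sub_cancel_left]
  have hρface : ∀ σ ∈ (bdry φ).support, ∃ τ ∈ φ.support, vset σ ⊆ vset τ := by
    intro σ hσ
    obtain ⟨τ, hτ, i, rfl⟩ := mem_support_bdry hσ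
    exact ⟨τ, hτ, vset_comp_subset τ i⟩
  have hv'le : ∀ i, (v - a) i ≤ (v - ee (0 : Fin (n + 1))) i := by
    intro i
    rw [sub_ee_apply]
    show v i - a i ≤ _
    by_cases hi : i = 0
    · subst hi
      rw [if_pos rfl]
      exact Nat.sub_le_sub_left ha0 (v 0)
    · rw [if_neg hi]
      exact Nat.sub_le_sub_left (Nat.zero_le _) (v i)
  -- the cone over `φ - ξ` is a chain in `Δ_v`, whenever `ξ` is a chain in `Δ_{v-a}`
  have hcone : ∀ ξ : PChain n (k + 1), ChainIn d n (v - a) ξ →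
      ChainIn d n v (vjoin a (φ - ξ)) := by
    intro ξ hξ σ' hσ'
    obtain ⟨σ, hσ, rfl⟩ := mem_support_vjoin hσ'
    have hσu : σ ∈ φ.support ∪ ξ.support := Finset.mem_union.1 (Finsupp.support_sub hσ)
      |> fun h => Finset.mem_union.2 h
    show IsFace d n v (vset (Fin.cons a σ))
    rw [vset_cons]
    rcases Finset.mem_union.1 (Finsupp.support_sub hσ) with h | h
    · have hain : a ∈ vset σ := Pp_subset _ ((hφG σ h).symm ▸ haG)
      rw [Finset.insert_eq_self.2 hain]
      exact hφin σ h
    · constructor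
      · rw [Finset.coe_insert]
        exact Set.insert_subset haA (hξ σ h).1
      · intro i
        have h5 := sum_insert_le a (vset σ) i
        have h6 : ∑ x ∈ vset σ, x i ≤ v i - a i := (hξ σ h).2 i
        have h7 : a i + (v i - a i) = v i := Nat.add_sub_cancel' (hale i)
        have h8 : a i + ∑ x ∈ vset σ, x i ≤ v i := by
          rw [← h7]; exact Nat.add_le_add_left h6 (a i)
        exact le_trans h5 h8
  by_cases hea : G.erase a = ∅
  · -- base case : G = {a}
    have hGa : G = {a} := by
      apply subset_antisymm
      · intro z hz
        rw [Finset.mem_singleton]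
        by_contra hne
        have : z ∈ G.erase a := Finset.mem_erase.2 ⟨hne, hz⟩
        rw [hea] at this
        exact absurd this (Finset.notMem_empty z)
      · intro z hz
        rw [Finset.mem_singleton] at hz
        exact hz ▸ haG
    have hva : v 0 = a 0 := by rw [← hGwt, hGa, Finset.sum_singleton]
    have hnoa : ∀ σ ∈ (bdry φ).support, a ∉ vset σ := by
      intro σ hσ hain
      have h1 : a 0 ≤ ∑ x ∈ vset σ, x 0 :=
        Finset.single_le_sum (f := fun x => x 0) (fun _ _ => Nat.zero_le _) hain
      have h2 := hρwt σ hσ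
      rw [hva] at h2
      exact Nat.lt_irrefl _ (lt_of_le_of_lt h1 h2)
    have hψin : ChainIn d n (v - a) (bdry φ) := by
      intro σ hσ
      obtain ⟨τ, hτ, hsub⟩ := hρface σ hσ
      have hain : a ∈ vset τ := Pp_subset _ ((hφG τ hτ).symm ▸ haG)
      constructor
      · intro x hx
        exact (hφin τ hτ).1 (hsub hx)
      · intro i
        exact sum_erase_le hain (hφin τ hτ).2 (vset σ) hsub (hnoa σ hσ) i
    have hcyc : IsCycle (bdry φ) := isCycle_bdry φ
    have hv'cl : (v - a) ∈ AddSubmonoid.closure (Adn d n) :=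
      mem_closure_of_dvd (∑ i, (v - a) i) (v - a) le_rfl hv'dvd
    have hdeg' : ((k + 1) + 2) * d ≤ ∑ i, (v - a) i := by
      have h9 : (k + 4) * d = (k + 3) * d + d := by ring
      have h9' : (k + 1 + 2) * d = (k + 3) * d := by ring
      clear hGwt hGwt'
      omega
    have hHv : Hvanish d n k (v - a) := hN (k + 1) (Nat.le_add_left 1 k) hk (v - a) hv'cl hdeg'
    obtain ⟨η, hηin, hηb⟩ := hHv (bdry φ) hψin hcyc
    refine ⟨vjoin a (φ - η), hcone η hηin, η, chainIn_mono hv'le hηin, ?_⟩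
    have h0 : bdry (φ - η) = 0 := by rw [bdry_sub, hηb, sub_self]
    rw [bdry_vjoin, h0, vjoin_zero, sub_zero]
    abel
  · -- inductive case : |G| ≥ 2
    have hene : (G.erase a).Nonempty := Finset.nonempty_iff_ne_empty.2 hea
    have hcard' : (G.erase a).card < g := by
      rw [Finset.card_erase_of_mem haG, hcard]
      exact Nat.sub_lt (lt_of_lt_of_le Nat.zero_lt_one
        (hcard ▸ Finset.card_pos.2 ⟨a, haG⟩)) Nat.zero_lt_one
    have hψmem : ∀ σ, σ ∈ ((bdry φ).filter
        (fun σ => Pp (vset σ) = G.erase a)).support →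
        σ ∈ (bdry φ).support ∧ Pp (vset σ) = G.erase a := by
      intro σ hσ
      rw [Finsupp.support_filter, Finset.mem_filter] at hσ
      exact hσ
    have hψin : ChainIn d n (v - a) ((bdry φ).filter
        (fun σ => Pp (vset σ) = G.erase a)) := by
      intro σ hσ
      obtain ⟨hσρ, hpσ⟩ := hψmem σ hσ
      obtain ⟨τ, hτ, hsub⟩ := hρface σ hσρ
      have hain : a ∈ vset τ := Pp_subset _ ((hφG τ hτ).symm ▸ haG)
      have hnoaσ : a ∉ vset σ := by
        intro hain'
        have h1 : a ∈ Pp (vset σ) := mem_Pp.2 ⟨hain', ha0⟩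
        rw [hpσ] at h1
        exact Finset.notMem_erase a G h1
      constructor
      · intro x hx
        exact (hφin τ hτ).1 (hsub hx)
      · intro i
        exact sum_erase_le hain (hφin τ hτ).2 (vset σ) hsub hnoaσ i
    have hψPp : ∀ σ ∈ ((bdry φ).filter
        (fun σ => Pp (vset σ) = G.erase a)).support, Pp (vset σ) = G.erase a :=
      fun σ hσ => (hψmem σ hσ).2
    have hnf : NonfullBdry (v - a) ((bdry φ).filter
        (fun σ => Pp (vset σ) = G.erase a)) :=
      nonfullBdry_psi d n k v a G haG ha0 hGpos hGwt φ hφG hρwt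
    have hdeg'' : (k + 3) * d ≤ ∑ i, (v - a) i := by
      have h9 : (k + 4) * d = (k + 3) * d + d := by ring
      clear hGwt hGwt'
      omega
    obtain ⟨θ', hθ'in, μ', hμ'in, hψeq⟩ :=
      peel_call d n m g IH k (le_trans (Nat.le_succ k) hk) (G.erase a) hcard' hene
        (fun x hx => hGpos x (Finset.erase_subset a G hx))
        (fun x hx => hGA (Finset.mem_coe.2 (Finset.erase_subset a G (Finset.mem_coe.1 hx))))
        (v - a) hv'dvd hdeg'' hGwt'
        ((bdry φ).filter (fun σ => Pp (vset σ) = G.erase a)) hψin hψPp hnf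
    have hv'0pos : 1 ≤ (v - a) 0 := by
      obtain ⟨b, hb⟩ := hene
      have h1 : b 0 ≤ ∑ x ∈ G.erase a, x 0 :=
        Finset.single_le_sum (f := fun x => x 0) (fun _ _ => Nat.zero_le _) hb
      have h2 : 0 < b 0 := hGpos b (Finset.erase_subset a G hb)
      rw [hGwt'] at h1
      exact le_trans h2 h1
    have hχeq : bdry φ - (bdry φ).filter (fun σ => Pp (vset σ) = G.erase a) =
        (bdry φ).filter (fun σ => ¬ Pp (vset σ) = G.erase a) := by
      have hsplit := Finsupp.filter_pos_add_filter_neg (bdry φ)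
        (fun σ => Pp (vset σ) = G.erase a)
      exact sub_eq_of_eq_add' hsplit.symm
    refine ⟨vjoin a (φ - θ'), hcone θ' hθ'in,
      θ' + vjoin a μ' + vjoin a (bdry φ - (bdry φ).filter
        (fun σ => Pp (vset σ) = G.erase a)), ?_, ?_⟩
    · refine chainIn_add (chainIn_add (chainIn_mono hv'le hθ'in) ?_) ?_
      · -- vjoin a μ'
        intro σ' hσ'
        obtain ⟨σ, hσ, rfl⟩ := mem_support_vjoin hσ'
        show IsFace d n (v - ee 0) (vset (Fin.cons a σ))
        rw [vset_cons]
        constructor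
        · rw [Finset.coe_insert]
          exact Set.insert_subset haA (hμ'in σ hσ).1
        · intro i
          have h5 := sum_insert_le a (vset σ) i
          have h6 : ∑ x ∈ vset σ, x i ≤ ((v - a) - ee (0 : Fin (n + 1))) i := (hμ'in σ hσ).2 i
          rw [sub_ee_apply] at h6
          rw [sub_ee_apply]
          have h7 : (v - a) i = v i - a i := rfl
          rw [h7] at h6
          by_cases hi : i = 0
          · subst hi
            rw [if_pos rfl] at h6 ⊢
            exact nat_aux _ _ _ _ _ h5 h6 (hale 0) hv'0pos
          · rw [if_neg hi] at h6 ⊢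
            exact nat_aux _ _ _ _ _ h5 h6 (hale i) (Nat.zero_le _)
      · -- vjoin a (χ part)
        intro σ' hσ'
        obtain ⟨σ, hσ, rfl⟩ := mem_support_vjoin hσ'
        rw [hχeq] at hσ
        have hσ2 : σ ∈ (bdry φ).support ∧ ¬ Pp (vset σ) = G.erase a := by
          rw [Finsupp.support_filter, Finset.mem_filter] at hσ
          exact hσ
        obtain ⟨τ, hτ, hsub⟩ := hρface σ hσ2.1
        have hain : a ∈ vset τ := Pp_subset _ ((hφG τ hτ).symm ▸ haG)
        have hins : insert a (vset σ) ⊆ vset τ := Finset.insert_subset hain hsub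
        show IsFace d n (v - ee 0) (vset (Fin.cons a σ))
        rw [vset_cons]
        constructor
        · intro x hx
          exact (hφin τ hτ).1 (hins hx)
        · intro i
          rw [sub_ee_apply]
          by_cases hi : i = 0
          · subst hi
            rw [if_pos rfl]
            -- strict bound via positive parts
            have hPins : Pp (insert a (vset σ)) = insert a (Pp (vset σ)) := Pp_insert_pos ha0
            have hPpσG : Pp (vset σ) ⊆ G := (hφG τ hτ) ▸ Pp_mono hsub
            have hsubG : insert a (Pp (vset σ)) ⊆ G := Finset.insert_subset haG hPpσG
            have hneG : insert a (Pp (vset σ)) ≠ G := by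
              intro hEq
              have h1 : G.erase a ⊆ Pp (vset σ) := by
                intro z hz
                obtain ⟨hza, hzG⟩ := Finset.mem_erase.1 hz
                rw [← hEq] at hzG
                rcases Finset.mem_insert.1 hzG with h | h
                · exact absurd h hza
                · exact h
              have h2 : Pp (vset σ) = G := eq_of_between haG h1 hPpσG hσ2.2
              have h3 : ∑ x ∈ vset σ, x 0 = v 0 := by
                rw [wt0_eq_wt0_Pp, h2, hGwt]
              exact Nat.lt_irrefl _ (h3 ▸ hρwt σ hσ2.1)
            have hlt : ∑ x ∈ insert a (Pp (vset σ)), x 0 < ∑ x ∈ G, x 0 :=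
              wt_lt_of_ssubset hsubG hneG hGpos
            have h4 : ∑ x ∈ insert a (vset σ), x 0 = ∑ x ∈ insert a (Pp (vset σ)), x 0 := by
              rw [wt0_eq_wt0_Pp, hPins]
            rw [h4]
            rw [hGwt] at hlt
            exact Nat.le_sub_one_of_lt hlt
          · rw [if_neg hi]
            have h5 : ∑ x ∈ insert a (vset σ), x i ≤ ∑ x ∈ vset τ, x i :=
              Finset.sum_le_sum_of_subset hins
            have h6 := (hφin τ hτ).2 i
            have h7 : v i - 0 = v i := Nat.sub_zero _
            rw [h7]
            exact le_trans h5 h6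
    · -- the boundary equation
      have hbθ' : bdry θ' = (bdry φ).filter (fun σ => Pp (vset σ) = G.erase a) - μ' := by
        rw [hψeq]; abel
      have e1 : bdry (φ - θ') =
          (bdry φ - (bdry φ).filter (fun σ => Pp (vset σ) = G.erase a)) + μ' := by
        rw [bdry_sub, hbθ']
        abel
      rw [bdry_vjoin, e1, vjoin_add]
      abel

lemma peel (d n m : ℕ)
    (hN : ∀ q, 1 ≤ q → q ≤ m + 2 → ∀ β ∈ AddSubmonoid.closure (Adn d n),
      (q + 2) * d ≤ ∑ i, β i → Hvanish d n (q - 1) β) :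
    ∀ g, PeelStmt d n m g := by
  intro g
  induction g using Nat.strong_induction_on with
  | _ g IH => exact peel_step d n m hN g IH

end Stmt16Aux
namespace Stmt16Aux

open scoped Classical in
lemma decomp (d n m : ℕ)
    (hN : ∀ q, 1 ≤ q → q ≤ m + 2 → ∀ β ∈ AddSubmonoid.closure (Adn d n),
      (q + 2) * d ≤ ∑ i, β i → Hvanish d n (q - 1) β) :
    ∀ (c : ℕ) (v : Fin (n + 1) → ℕ), (d ∣ ∑ i, v i) → ((m + 5) * d ≤ ∑ i, v i) →
    ∀ φ : PChain n (m + 2), ChainIn d n v φ →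
    (∀ σ ∈ φ.support, ∑ x ∈ vset σ, x 0 = v 0) →
    (∀ σ ∈ (bdry φ).support, ∑ x ∈ vset σ, x 0 < v 0) →
    (φ.support.image (fun σ => Pp (vset σ))).card ≤ c →
    ∃ θ : PChain n (m + 3), ChainIn d n v θ ∧ ChainIn d n (v - ee 0) (φ - bdry θ) := by
  intro c
  induction c with
  | zero =>
    intro v hdvd hdeg φ hφin hfull hbd hcard
    have h1 : φ.support.image (fun σ => Pp (vset σ)) = ∅ :=
      Finset.card_eq_zero.1 (Nat.le_zero.1 hcard)
    have h2 : φ.support = ∅ := Finset.image_eq_empty.1 h1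
    have h3 : φ = 0 := Finsupp.support_eq_empty.1 h2
    exact ⟨0, chainIn_zero, by rw [h3, bdry_zero, sub_zero]; exact chainIn_zero⟩
  | succ c ihc =>
    intro v hdvd hdeg φ hφin hfull hbd hcard
    rcases Finset.eq_empty_or_nonempty φ.support with hemp | ⟨τ0, hτ0⟩
    · have h3 : φ = 0 := Finsupp.support_eq_empty.1 hemp
      exact ⟨0, chainIn_zero, by rw [h3, bdry_zero, sub_zero]; exact chainIn_zero⟩
    by_cases hv0 : v 0 = 0
    · refine ⟨0, chainIn_zero, ?_⟩
      rw [bdry_zero, sub_zero]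
      intro σ hσ
      refine ⟨(hφin σ hσ).1, fun i => ?_⟩
      rw [sub_ee_apply]
      by_cases hi : i = 0
      · subst hi
        rw [if_pos rfl]
        have := hfull σ hσ
        rw [hv0] at this ⊢
        exact le_of_eq this
      · rw [if_neg hi, Nat.sub_zero]
        exact (hφin σ hσ).2 i
    have hv0pos : 0 < v 0 := Nat.pos_of_ne_zero hv0
    -- the positive part of the first simplex
    have hGwt : ∑ x ∈ Pp (vset τ0), x 0 = v 0 := by
      rw [← wt0_eq_wt0_Pp]
      exact hfull τ0 hτ0
    set G := Pp (vset τ0) with hGdef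
    have hGpos : ∀ x ∈ G, 0 < x 0 := fun x hx => (mem_Pp.1 hx).2
    have hGne : G.Nonempty := by
      rcases Finset.eq_empty_or_nonempty G with h | h
      · rw [h, Finset.sum_empty] at hGwt
        exact absurd hGwt.symm hv0
      · exact h
    have hGA : ↑G ⊆ Adn d n := by
      intro x hx
      exact (hφin τ0 hτ0).1 (Pp_subset _ hx)
    -- split φ into the G-component and the rest
    have hsplit := Finsupp.filter_pos_add_filter_neg φ (fun σ => Pp (vset σ) = G)
    have hGapp : ∀ σ, (Finsupp.filter (fun σ => Pp (vset σ) = G) φ) σ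
        + (Finsupp.filter (fun σ => ¬ Pp (vset σ) = G) φ) σ = φ σ := by
      intro σ
      rw [← Finsupp.add_apply, hsplit]
    have hGsup : ∀ σ ∈ (Finsupp.filter (fun σ => Pp (vset σ) = G) φ).support,
        σ ∈ φ.support ∧ Pp (vset σ) = G := by
      intro σ hσ
      rw [Finsupp.support_filter, Finset.mem_filter] at hσ
      exact hσ
    have hrsup : ∀ σ ∈ (Finsupp.filter (fun σ => ¬ Pp (vset σ) = G) φ).support,
        σ ∈ φ.support ∧ ¬ Pp (vset σ) = G := by
      intro σ hσ
      rw [Finsupp.support_filter, Finset.mem_filter] at hσ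
      exact hσ
    -- the faces of any full simplex of φ that is itself full has determined positive part
    have hkey : ∀ (q : (Fin (m + 2 + 1) → (Fin (n + 1) → ℕ)) → Prop)
        (ψ : PChain n (m + 2)), (∀ τ ∈ ψ.support, τ ∈ φ.support ∧ q τ) →
        ∀ σ : Fin (m + 1 + 1) → (Fin (n + 1) → ℕ),
        σ ∈ (bdry ψ).support → v 0 ≤ ∑ x ∈ vset σ, x 0 →
        ∃ τ ∈ φ.support, q τ ∧ Pp (vset σ) = Pp (vset τ) := by
      intro q ψ hψ σ hσ hge
      obtain ⟨τ, hτ, i, rfl⟩ := mem_support_bdry hσ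
      have hτ2 : τ ∈ φ.support ∧ q τ := hψ τ hτ
      have hsub : vset (τ ∘ i.succAbove) ⊆ vset τ := vset_comp_subset τ i
      have hwτ : ∑ x ∈ vset τ, x 0 = v 0 := hfull τ hτ2.1
      have hPle : Pp (vset (τ ∘ i.succAbove)) ⊆ Pp (vset τ) := Pp_mono hsub
      have hPeq : Pp (vset (τ ∘ i.succAbove)) = Pp (vset τ) := by
        refine eq_of_subset_of_wt_ge hPle (fun x hx => (mem_Pp.1 hx).2) ?_
        rw [← wt0_eq_wt0_Pp, ← wt0_eq_wt0_Pp, hwτ]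
        exact le_trans hge (le_refl _)
      exact ⟨τ, hτ2.1, hτ2.2, hPeq⟩
    -- boundary of the G-part has no full faces
    have hGrel : ∀ σ ∈ (bdry (Finsupp.filter (fun σ => Pp (vset σ) = G) φ)).support,
        ∑ x ∈ vset σ, x 0 < v 0 := by
      intro σ hσ
      by_contra hge
      push_neg at hge
      obtain ⟨τ, hτ, hqτ, hPeq⟩ := hkey _ _ hGsup σ hσ hge
      have hPσ : Pp (vset σ) = G := hPeq.trans hqτ
      have hz1 : (bdry φ) σ = 0 := by
        by_contra hne
        have := hbd σ (Finsupp.mem_support_iff.2 hne)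
        exact absurd hge (not_le.2 this)
      have hz2 : (bdry (Finsupp.filter (fun σ => ¬ Pp (vset σ) = G) φ)) σ = 0 := by
        by_contra hne
        obtain ⟨τ', hτ', hqτ', hPeq'⟩ := hkey _ _ hrsup σ (Finsupp.mem_support_iff.2 hne) hge
        exact hqτ' (hPeq'.symm.trans hPσ)
      have hz3 : (bdry (Finsupp.filter (fun σ => Pp (vset σ) = G) φ)) σ = 0 := by
        have h4 : bdry (Finsupp.filter (fun σ => Pp (vset σ) = G) φ)
            + bdry (Finsupp.filter (fun σ => ¬ Pp (vset σ) = G) φ) = bdry φ := by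
          rw [← bdry_add, hsplit]
        have h5 := congrArg (fun c => c σ) h4
        simp only [Finsupp.add_apply] at h5
        rw [hz2, add_zero] at h5
        rw [h5, hz1]
      exact absurd hz3 (Finsupp.mem_support_iff.1 hσ)
    -- apply the peeling lemma to the G-part
    obtain ⟨θG, hθGin, μG, hμGin, hφGeq⟩ :=
      peel d n m hN G.card G rfl hGne hGpos hGA (m + 1) (le_refl (m + 2)) v hdvd hdeg hGwt
        (Finsupp.filter (fun σ => Pp (vset σ) = G) φ)
        (chainIn_of_subset (fun σ hσ => (hGsup σ hσ).1) hφin)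
        (fun σ hσ => (hGsup σ hσ).2) hGrel
    -- recurse on the rest
    have hrrel : ∀ σ ∈ (bdry (Finsupp.filter (fun σ => ¬ Pp (vset σ) = G) φ)).support,
        ∑ x ∈ vset σ, x 0 < v 0 := by
      intro σ hσ
      by_contra hge
      push_neg at hge
      obtain ⟨τ, hτ, hqτ, hPeq⟩ := hkey _ _ hrsup σ hσ hge
      have hz1 : (bdry φ) σ = 0 := by
        by_contra hne
        have := hbd σ (Finsupp.mem_support_iff.2 hne)
        exact absurd hge (not_le.2 this)
      have hz2 : (bdry (Finsupp.filter (fun σ => Pp (vset σ) = G) φ)) σ = 0 := by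
        by_contra hne
        obtain ⟨τ', hτ', hqτ', hPeq'⟩ := hkey _ _ hGsup σ (Finsupp.mem_support_iff.2 hne) hge
        exact hqτ (hPeq.symm.trans (hPeq'.trans hqτ'))
      have hz3 : (bdry (Finsupp.filter (fun σ => ¬ Pp (vset σ) = G) φ)) σ = 0 := by
        have h4 : bdry (Finsupp.filter (fun σ => Pp (vset σ) = G) φ)
            + bdry (Finsupp.filter (fun σ => ¬ Pp (vset σ) = G) φ) = bdry φ := by
          rw [← bdry_add, hsplit]
        have h5 := congrArg (fun c => c σ) h4
        simp only [Finsupp.add_apply] at h5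
        rw [hz2, zero_add] at h5
        rw [h5, hz1]
      exact absurd hz3 (Finsupp.mem_support_iff.1 hσ)
    have hGmem : G ∈ φ.support.image (fun σ => Pp (vset σ)) :=
      Finset.mem_image.2 ⟨τ0, hτ0, rfl⟩
    have hcard' : ((Finsupp.filter (fun σ => ¬ Pp (vset σ) = G) φ).support.image
        (fun σ => Pp (vset σ))).card ≤ c := by
      have hsub2 : (Finsupp.filter (fun σ => ¬ Pp (vset σ) = G) φ).support.image
          (fun σ => Pp (vset σ)) ⊆ (φ.support.image (fun σ => Pp (vset σ))).erase G := by
        intro z hz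
        obtain ⟨σ, hσ, rfl⟩ := Finset.mem_image.1 hz
        obtain ⟨hσφ, hσne⟩ := hrsup σ hσ
        exact Finset.mem_erase.2 ⟨hσne, Finset.mem_image.2 ⟨σ, hσφ, rfl⟩⟩
      have h6 := Finset.card_le_card hsub2
      rw [Finset.card_erase_of_mem hGmem] at h6
      exact le_trans h6 (Nat.sub_le_sub_right hcard 1)
    obtain ⟨θr, hθrin, hrest⟩ := ihc v hdvd hdeg
      (Finsupp.filter (fun σ => ¬ Pp (vset σ) = G) φ)
      (chainIn_of_subset (fun σ hσ => (hrsup σ hσ).1) hφin)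
      (fun σ hσ => hfull σ (hrsup σ hσ).1) hrrel hcard'
    refine ⟨θG + θr, chainIn_add hθGin hθrin, ?_⟩
    have h7 : φ - bdry (θG + θr) =
        μG + (Finsupp.filter (fun σ => ¬ Pp (vset σ) = G) φ - bdry θr) := by
      have h8 : μG + (Finsupp.filter (fun σ => ¬ Pp (vset σ) = G) φ - bdry θr) =
          (Finsupp.filter (fun σ => Pp (vset σ) = G) φ
            + Finsupp.filter (fun σ => ¬ Pp (vset σ) = G) φ) - bdry (θG + θr) := by
        rw [hφGeq, bdry_add]
        abel
      rw [h8, hsplit]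
    rw [h7]
    exact chainIn_add hμGin hrest

open scoped Classical in
lemma onestep (d n m : ℕ)
    (hN : ∀ q, 1 ≤ q → q ≤ m + 2 → ∀ β ∈ AddSubmonoid.closure (Adn d n),
      (q + 2) * d ≤ ∑ i, β i → Hvanish d n (q - 1) β)
    (v : Fin (n + 1) → ℕ) (hdvd : d ∣ ∑ i, v i) (hdeg : (m + 5) * d ≤ ∑ i, v i)
    (γ : PChain n (m + 2)) (hin : ChainIn d n v γ) (hcyc : bdry γ = 0) :
    ∃ θ : PChain n (m + 3), ChainIn d n v θ ∧ ChainIn d n (v - ee 0) (γ - bdry θ) := by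
  have hsplit := Finsupp.filter_pos_add_filter_neg γ (fun σ => ∑ x ∈ vset σ, x 0 = v 0)
  have hGsup : ∀ σ ∈ (Finsupp.filter (fun σ => ∑ x ∈ vset σ, x 0 = v 0) γ).support,
      σ ∈ γ.support ∧ ∑ x ∈ vset σ, x 0 = v 0 := by
    intro σ hσ
    rw [Finsupp.support_filter, Finset.mem_filter] at hσ
    exact hσ
  have hrsup : ∀ σ ∈ (Finsupp.filter (fun σ => ¬ ∑ x ∈ vset σ, x 0 = v 0) γ).support,
      σ ∈ γ.support ∧ ¬ ∑ x ∈ vset σ, x 0 = v 0 := by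
    intro σ hσ
    rw [Finsupp.support_filter, Finset.mem_filter] at hσ
    exact hσ
  have hbd : ∀ σ ∈ (bdry (Finsupp.filter (fun σ => ∑ x ∈ vset σ, x 0 = v 0) γ)).support,
      ∑ x ∈ vset σ, x 0 < v 0 := by
    intro σ hσ
    by_contra hge
    push_neg at hge
    have hz2 : (bdry (Finsupp.filter (fun σ => ¬ ∑ x ∈ vset σ, x 0 = v 0) γ)) σ = 0 := by
      by_contra hne
      obtain ⟨τ', hτ', i', rfl⟩ := mem_support_bdry (Finsupp.mem_support_iff.2 hne)
      obtain ⟨hτ'γ, hτ'ne⟩ := hrsup τ' hτ'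
      have h1 : ∑ x ∈ vset (τ' ∘ i'.succAbove), x 0 ≤ ∑ x ∈ vset τ', x 0 :=
        Finset.sum_le_sum_of_subset (vset_comp_subset τ' i')
      have h2 : ∑ x ∈ vset τ', x 0 ≤ v 0 := (hin τ' hτ'γ).2 0
      have h3 : ∑ x ∈ vset τ', x 0 < v 0 := lt_of_le_of_ne h2 hτ'ne
      exact Nat.lt_irrefl _ (lt_of_le_of_lt (le_trans hge h1) h3)
    have hz3 : (bdry (Finsupp.filter (fun σ => ∑ x ∈ vset σ, x 0 = v 0) γ)) σ = 0 := by
      have h4 : bdry (Finsupp.filter (fun σ => ∑ x ∈ vset σ, x 0 = v 0) γ)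
          + bdry (Finsupp.filter (fun σ => ¬ ∑ x ∈ vset σ, x 0 = v 0) γ) = bdry γ := by
        rw [← bdry_add, hsplit]
      have h5 := congrArg (fun c => c σ) h4
      simp only [Finsupp.add_apply] at h5
      rw [hz2, add_zero, hcyc] at h5
      exact h5
    exact absurd hz3 (Finsupp.mem_support_iff.1 hσ)
  obtain ⟨θ, hθin, hres⟩ := decomp d n m hN
    ((Finsupp.filter (fun σ => ∑ x ∈ vset σ, x 0 = v 0) γ).support.image
      (fun σ => Pp (vset σ))).card v hdvd hdeg
    (Finsupp.filter (fun σ => ∑ x ∈ vset σ, x 0 = v 0) γ)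
    (chainIn_of_subset (fun σ hσ => (hGsup σ hσ).1) hin)
    (fun σ hσ => (hGsup σ hσ).2) hbd le_rfl
  refine ⟨θ, hθin, ?_⟩
  have h7 : γ - bdry θ =
      (Finsupp.filter (fun σ => ∑ x ∈ vset σ, x 0 = v 0) γ - bdry θ)
      + Finsupp.filter (fun σ => ¬ ∑ x ∈ vset σ, x 0 = v 0) γ := by
    have h8 : (Finsupp.filter (fun σ => ∑ x ∈ vset σ, x 0 = v 0) γ - bdry θ)
        + Finsupp.filter (fun σ => ¬ ∑ x ∈ vset σ, x 0 = v 0) γ =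
        (Finsupp.filter (fun σ => ∑ x ∈ vset σ, x 0 = v 0) γ
          + Finsupp.filter (fun σ => ¬ ∑ x ∈ vset σ, x 0 = v 0) γ) - bdry θ := by
      abel
    rw [h8, hsplit]
  rw [h7]
  refine chainIn_add hres ?_
  intro σ hσ
  obtain ⟨hσγ, hσne⟩ := hrsup σ hσ
  refine ⟨(hin σ hσγ).1, fun i => ?_⟩
  rw [sub_ee_apply]
  by_cases hi : i = 0
  · subst hi
    rw [if_pos rfl]
    have h1 : ∑ x ∈ vset σ, x 0 ≤ v 0 := (hin σ hσγ).2 0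
    exact Nat.le_sub_one_of_lt (lt_of_le_of_ne h1 hσne)
  · rw [if_neg hi, Nat.sub_zero]
    exact (hin σ hσγ).2 i

end Stmt16Aux
namespace Stmt16Aux

lemma chainInX_add {d n : ℕ} {b : Fin (n + 1) → ℕ} {k : ℕ} {c c' : PChain n k}
    (hc : ChainInX d n b c) (hc' : ChainInX d n b c') : ChainInX d n b (c + c') := by
  intro σ hσ
  rcases Finset.mem_union.1 (Finsupp.support_add hσ) with h | h
  · exact hc σ h
  · exact hc' σ h

lemma chainInX_zero {d n : ℕ} {b : Fin (n + 1) → ℕ} {k : ℕ} :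
    ChainInX d n b (0 : PChain n k) := by
  intro σ hσ
  simp at hσ

lemma ladder (d n m : ℕ)
    (hN : ∀ q, 1 ≤ q → q ≤ m + 2 → ∀ β ∈ AddSubmonoid.closure (Adn d n),
      (q + 2) * d ≤ ∑ i, β i → Hvanish d n (q - 1) β)
    (b : Fin (n + 1) → ℕ) (h01 : (0 : Fin (n + 1)) ≠ 1) :
    ∀ t (v : Fin (n + 1) → ℕ), v 0 = t → v 1 + v 0 = b 1 + b 0 →
    (∀ i, i ≠ 0 → i ≠ 1 → v i = b i) → v 0 ≤ b 0 → (d ∣ ∑ i, v i) →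
    ((m + 5) * d ≤ ∑ i, v i) →
    ∀ γ : PChain n (m + 2), ChainIn d n v γ → bdry γ = 0 →
    ∃ γ' : PChain n (m + 2),
      ChainIn d n (fun i => if i = 0 then 0 else if i = 1 then b 0 + b 1 else b i) γ' ∧
        bdry γ' = 0 ∧
        ∃ η : PChain n (m + 3), ChainInX d n b η ∧ bdry η = γ - γ' := by
  intro t
  induction t with
  | zero =>
    intro v hv0 hv1 hvi hvle hdvd hdeg γ hγin hγcyc
    have hveq : v = (fun i => if i = 0 then 0 else if i = 1 then b 0 + b 1 else b i) := by
      funext i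
      by_cases hi : i = 0
      · subst hi
        rw [if_pos rfl, hv0]
      · rw [if_neg hi]
        by_cases hi1 : i = 1
        · subst hi1
          rw [if_pos rfl]
          rw [hv0] at hv1
          omega
        · rw [if_neg hi1]
          exact hvi i hi hi1
    refine ⟨γ, by rwa [hveq] at hγin, hγcyc, 0, chainInX_zero, by rw [bdry_zero, sub_self]⟩
  | succ t iht =>
    intro v hv0 hv1 hvi hvle hdvd hdeg γ hγin hγcyc
    obtain ⟨θ, hθin, hres⟩ := onestep d n m hN v hdvd hdeg γ hγin hγcyc
    set w : Fin (n + 1) → ℕ := fun i => if i = 0 then t else if i = 1 then v 1 + 1 else v i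
      with hw
    have hw0 : w 0 = t := by simp [hw]
    have hw1 : w 1 = v 1 + 1 := by simp [hw, Ne.symm h01]
    have hwi : ∀ i, i ≠ 0 → i ≠ 1 → w i = v i := by
      intro i hi hi1
      simp [hw, hi, hi1]
    have hle : ∀ i, (v - ee (0 : Fin (n + 1))) i ≤ w i := by
      intro i
      rw [sub_ee_apply]
      by_cases hi : i = 0
      · subst hi
        rw [if_pos rfl, hw0, hv0]
        omega
      · rw [if_neg hi]
        by_cases hi1 : i = 1
        · subst hi1
          rw [hw1]
          omega
        · rw [hwi i hi hi1]
          omega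
    have hsumw : ∑ i, w i = ∑ i, v i := by
      have h1mem : (1 : Fin (n + 1)) ∈ Finset.univ.erase (0 : Fin (n + 1)) :=
        Finset.mem_erase.2 ⟨Ne.symm h01, Finset.mem_univ 1⟩
      have e1 : w 0 + ∑ i ∈ Finset.univ.erase 0, w i = ∑ i, w i :=
        Finset.add_sum_erase _ w (Finset.mem_univ 0)
      have e2 : w 1 + ∑ i ∈ (Finset.univ.erase 0).erase 1, w i
          = ∑ i ∈ Finset.univ.erase 0, w i :=
        Finset.add_sum_erase _ w h1mem
      have e3 : v 0 + ∑ i ∈ Finset.univ.erase 0, v i = ∑ i, v i :=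
        Finset.add_sum_erase _ v (Finset.mem_univ 0)
      have e4 : v 1 + ∑ i ∈ (Finset.univ.erase 0).erase 1, v i
          = ∑ i ∈ Finset.univ.erase 0, v i :=
        Finset.add_sum_erase _ v h1mem
      have e5 : ∑ i ∈ (Finset.univ.erase 0).erase 1, w i
          = ∑ i ∈ (Finset.univ.erase 0).erase 1, v i := by
        refine Finset.sum_congr rfl fun i hi => ?_
        have h := Finset.mem_erase.1 hi
        exact hwi i (Finset.mem_erase.1 h.2).1 h.1
      rw [hw0, hw1] at *
      omega
    have hγ1cyc : bdry (γ - bdry θ) = 0 := by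
      rw [bdry_sub, hγcyc, bdry_bdry, sub_self]
    obtain ⟨γ', hγ'in, hγ'cyc, η', hη'X, hη'b⟩ := iht w hw0
      (by rw [hw1, hw0]; omega)
      (fun i hi hi1 => by rw [hwi i hi hi1]; exact hvi i hi hi1)
      (by rw [hw0]; omega)
      (by rw [hsumw]; exact hdvd)
      (by rw [hsumw]; exact hdeg)
      (γ - bdry θ) (chainIn_mono hle hres) hγ1cyc
    refine ⟨γ', hγ'in, hγ'cyc, θ + η', ?_, ?_⟩
    · refine chainInX_add ?_ hη'X
      intro σ hσ
      refine ⟨b 0 - v 0, Nat.sub_le _ _, ?_⟩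
      have hveq : (fun i => if i = 0 then b 0 - (b 0 - v 0)
          else if i = 1 then b 1 + (b 0 - v 0) else b i) = v := by
        funext i
        by_cases hi : i = 0
        · subst hi
          rw [if_pos rfl]
          omega
        · rw [if_neg hi]
          by_cases hi1 : i = 1
          · subst hi1
            rw [if_pos rfl]
            omega
          · rw [if_neg hi1]
            exact (hvi i hi hi1).symm
      rw [hveq]
      exact hθin σ hσ
    · rw [bdry_add, hη'b]
      abel

end Stmt16Aux
namespace Stmt16Aux

lemma signsum : ∀ r : ℕ, (∑ i : Fin r, ((-1 : ℂ)) ^ ((i : ℕ))) = if Even r then 0 else 1 := by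
  intro r
  induction r with
  | zero => simp
  | succ r ih =>
    rw [Fin.sum_univ_succ]
    have hterm : ∀ i : Fin r, ((-1 : ℂ)) ^ (((i.succ : Fin (r + 1))) : ℕ)
        = -((-1 : ℂ) ^ (i : ℕ)) := by
      intro i
      rw [Fin.val_succ, pow_succ, mul_neg_one]
    rw [Finset.sum_congr rfl (fun i _ => hterm i), Finset.sum_neg_distrib, ih]
    by_cases h : Even r
    · rw [if_pos h, if_neg (by simp [Nat.even_add_one, h])]
      simp
    · rw [if_neg h, if_pos (by simp [Nat.even_add_one, h])]
      simp

lemma n0_case (d m : ℕ) (b : Fin 1 → ℕ)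
    (γ : PChain 0 (m + 2)) (hγ : ChainIn d 0 b γ) (hcyc : bdry γ = 0) :
    ∃ γ' : PChain 0 (m + 2),
      ChainIn d 0 (fun i => if i = 0 then 0 else if i = 1 then b 0 + b 1 else b i) γ' ∧
        bdry γ' = 0 ∧
        ∃ η : PChain 0 (m + 3), ChainInX d 0 b η ∧ bdry η = γ - γ' := by
  by_cases hγ0 : γ = 0
  · exact ⟨0, chainIn_zero, bdry_zero, 0, chainInX_zero, by rw [hγ0, bdry_zero, sub_self]⟩
  have hvert : ∀ σ ∈ γ.support, ∀ i : Fin (m + 2 + 1), σ i 0 = d := by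
    intro σ hσ i
    have h1 : σ i ∈ Adn d 0 := (hγ σ hσ).1
      (Finset.mem_coe.2 (Finset.mem_image.2 ⟨i, Finset.mem_univ i, rfl⟩))
    have h2 : ∑ j, σ i j = d := h1
    rwa [Fin.sum_univ_one] at h2
  have hsupp : γ.support ⊆ {(fun _ _ => d : Fin (m + 2 + 1) → Fin 1 → ℕ)} := by
    intro σ hσ
    rw [Finset.mem_singleton]
    funext i j
    have hj : j = 0 := Fin.ext (Nat.lt_one_iff.mp j.isLt)
    rw [hj]
    exact hvert σ hσ i
  have hγeq : γ = Finsupp.single (fun _ _ => d : Fin (m + 2 + 1) → Fin 1 → ℕ)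
      (γ (fun _ _ => d)) := Finsupp.support_subset_singleton.1 hsupp
  have hκne : γ (fun _ _ => d) ≠ 0 := by
    intro h
    rw [hγeq, h, Finsupp.single_zero] at hγ0
    exact hγ0 rfl
  have hκsupp : (fun _ _ => d : Fin (m + 2 + 1) → Fin 1 → ℕ) ∈ γ.support :=
    Finsupp.mem_support_iff.2 hκne
  have hdb : d ≤ b 0 := by
    have h3 := (hγ _ hκsupp).2 0
    have h4 : Finset.image (fun _ _ => d : Fin (m + 2 + 1) → Fin 1 → ℕ) Finset.univ
        = {fun _ => (d : ℕ)} := Finset.image_const Finset.univ_nonempty _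
    rw [h4, Finset.sum_singleton] at h3
    exact h3
  have hgf : (gface (fun _ _ => d : Fin (m + 2 + 1) → Fin 1 → ℕ) : PChain 0 (m + 1)) =
      (if Even (m + 1 + 2) then (0 : ℂ) else 1) •
        Finsupp.single (fun _ _ => (d : ℕ)) 1 := by
    rw [show (gface (fun _ _ => d : Fin (m + 2 + 1) → Fin 1 → ℕ) : PChain 0 (m + 1)) =
        ∑ i : Fin (m + 1 + 2), ((-1 : ℂ) ^ (i : ℕ)) •
          Finsupp.single ((fun _ _ => d : Fin (m + 2 + 1) → Fin 1 → ℕ) ∘ i.succAbove) 1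
      from rfl]
    rw [← signsum (m + 1 + 2), Finset.sum_smul]
    exact Finset.sum_congr rfl fun i _ => rfl
  have hbγ : bdry γ = γ (fun _ _ => d) • ((if Even (m + 1 + 2) then (0 : ℂ) else 1) •
      Finsupp.single (fun _ _ => (d : ℕ)) 1) := by
    conv_lhs => rw [hγeq]
    rw [bdry_single, hgf]
  by_cases hm : Even m
  · -- m even : m+3 odd, so the coefficient is 1 and the cycle condition forces γ = 0
    exfalso
    rw [hbγ, if_neg (by rw [Nat.even_iff] at hm ⊢; omega), one_smul,
      Finsupp.smul_single, smul_eq_mul, mul_one] at hcyc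
    exact hκne (Finsupp.single_eq_zero.1 hcyc)
  · -- m odd : γ bounds the cone
    refine ⟨0, chainIn_zero, bdry_zero,
      γ (fun _ _ => d) • Finsupp.single (fun _ _ => (d : ℕ) :
        Fin (m + 3 + 1) → Fin 1 → ℕ) 1, ?_, ?_⟩
    · intro σ hσ
      have h5 := Finsupp.support_smul hσ
      have h6 := Finsupp.support_single_subset h5
      rw [Finset.mem_singleton] at h6
      subst h6
      refine ⟨0, Nat.zero_le _, ?_, ?_⟩
      · intro x hx
        rw [Finset.image_const Finset.univ_nonempty] at hx
        rw [Finset.coe_singleton, Set.mem_singleton_iff] at hx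
        subst hx
        show ∑ j, (fun _ => (d : ℕ)) j = d
        rw [Fin.sum_univ_one]
      · intro i
        have hi : i = 0 := Fin.ext (Nat.lt_one_iff.mp i.isLt)
        subst hi
        rw [Finset.image_const Finset.univ_nonempty, Finset.sum_singleton]
        simpa using hdb
    · rw [bdry_smul, bdry_single, sub_zero, one_smul]
      have hgf2 : (gface (fun _ _ => (d : ℕ) : Fin (m + 3 + 1) → Fin 1 → ℕ)
          : PChain 0 (m + 2)) =
          (if Even (m + 2 + 2) then (0 : ℂ) else 1) •
            Finsupp.single (fun _ _ => (d : ℕ)) 1 := by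
        rw [show (gface (fun _ _ => (d : ℕ) : Fin (m + 3 + 1) → Fin 1 → ℕ)
            : PChain 0 (m + 2)) =
            ∑ i : Fin (m + 2 + 2), ((-1 : ℂ) ^ (i : ℕ)) •
              Finsupp.single ((fun _ _ => (d : ℕ) :
                Fin (m + 3 + 1) → Fin 1 → ℕ) ∘ i.succAbove) 1
          from rfl]
        rw [← signsum (m + 2 + 2), Finset.sum_smul]
        exact Finset.sum_congr rfl fun i _ => rfl
      rw [hgf2, if_neg (by rw [Nat.even_iff] at hm ⊢; omega), one_smul,
        Finsupp.smul_single, smul_eq_mul, mul_one]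
      exact hγeq.symm

end Stmt16Aux

/-- Proposition 9, "step 1", of the paper; here `p = m + 3`.
Let `b ∈ ℕA_{d,n}` with `deg b ≥ p+2` and let `γ` be a `(p−1)`-cycle in `Δ_b`.  Assume
(a) `H_{p−3}(Δ_{c−e₁}) = 0` for all `c ∈ ℕA_{d,n}` with `deg c ≥ p+1`, and
(b) `H_{q−1}(Δ_β) = 0` for all `β ∈ ℕA_{d,n}` with `deg β ≥ q+2` and all `1 ≤ q ≤ p−1`
(i.e. `O_{ℙⁿ}(d)` satisfies `N_{p−1}`).
Then there is a `(p−1)`-cycle `γ'` in `Δ_{(0, b₁+b₂, b₃, …)}` homologous to `γ` in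
`X_b = ⋃_{j=0}^{b₁} Δ_{b−je₁+je₂}`. -/
theorem stmt16 (d n m : ℕ) (b : Fin (n + 1) → ℕ)
    (hb : b ∈ AddSubmonoid.closure (Adn d n))
    (hdeg : (m + 5) * d ≤ ∑ i, b i)
    (γ : PChain n (m + 2)) (hγ : ChainIn d n b γ) (hcyc : bdry γ = 0)
    (ha : ∀ c ∈ AddSubmonoid.closure (Adn d n),
      (m + 4) * d ≤ ∑ i, c i → Hvanish d n m (c - ee 0))
    (hN : ∀ q, 1 ≤ q → q ≤ m + 2 → ∀ β ∈ AddSubmonoid.closure (Adn d n),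
      (q + 2) * d ≤ ∑ i, β i → Hvanish d n (q - 1) β) :
    ∃ γ' : PChain n (m + 2),
      ChainIn d n (fun i => if i = 0 then 0 else if i = 1 then b 0 + b 1 else b i) γ' ∧
        bdry γ' = 0 ∧
        ∃ η : PChain n (m + 3), ChainInX d n b η ∧ bdry η = γ - γ' := by
  have hdvdb : d ∣ ∑ i, b i := Stmt16Aux.dvd_sum_of_mem_closure hb
  clear hb ha
  cases n with
  | zero => exact Stmt16Aux.n0_case d m b γ hγ hcyc
  | succ n' =>
    have h01 : (0 : Fin (n' + 1 + 1)) ≠ 1 := by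
      intro h
      simpa using congrArg Fin.val h
    exact Stmt16Aux.ladder d (n' + 1) m hN b h01 (b 0) b rfl rfl (fun _ _ _ => rfl)
      le_rfl hdvdb hdeg γ hγ hcyc
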